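/- Let E : X → Y be a bounded linear operator and A a closed, densely defined linear operator from D(A) ⊆ X to Y. If the pencil λE − A has a right singular polynomial, then there exists a nonzero X-valued polynomial function f such that f(0) = 0, f(t) ∈ D(A) for every t ∈ ℝ, and E f′(t) = A f(t) for every t ∈ ℝ. In particular, the Cauchy problem E ẋ(t) = A x(t), x(0) = 0, has a nonzero classical solution. -/

import Mathlib

open Filter Topology

noncomputable section

variable {X Y : Type*}
  [NormedAddCommGroup X] [InnerProductSpace ℂ X] [CompleteSpace X]
  [NormedAddCommGroup Y] [InnerProductSpace ℂ Y] [CompleteSpace Y]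

/-- Evaluation of the `X`-valued polynomial `p(λ) = ∑_{j=0}^k λ^j a_j` at `lam`. -/
def polyEval {Z : Type*} [AddCommGroup Z] [Module ℂ Z] (a : ℕ → Z) (k : ℕ) (lam : ℂ) : Z :=
  ∑ j ∈ Finset.range (k + 1), lam ^ j • a j

/-- Application of a partially defined operator, extended by `0` outside its domain. -/
noncomputable def pap {W Z : Type*} [NormedAddCommGroup W] [InnerProductSpace ℂ W]
    [NormedAddCommGroup Z] [InnerProductSpace ℂ Z] (A : W →ₗ.[ℂ] Z) (v : W) : Z :=
  haveI := Classical.dec (v ∈ A.domain)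
  if h : v ∈ A.domain then A ⟨v, h⟩ else 0

/-- The pencil `λE - A` (with `E` bounded) has a right singular polynomial: a nonzero
`X`-valued polynomial `p` with `p(λ0) ∈ D(A)` and `(λ0 E - A) p(λ0) = 0` for all `λ0`. -/
def HasRightSingularPoly (E : X →L[ℂ] Y) (A : X →ₗ.[ℂ] Y) : Prop :=
  ∃ (k : ℕ) (a : ℕ → X), (∃ j ≤ k, a j ≠ 0) ∧
    ∀ lam : ℂ, polyEval a k lam ∈ A.domain ∧
      lam • E (polyEval a k lam) - pap A (polyEval a k lam) = 0

/-- Coefficient extraction: a vector-valued polynomial vanishing identically on `ℂ`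
has all coefficients zero. -/
lemma coeff_zero_of_forall_eval_zero {V : Type*} [AddCommGroup V] [Module ℂ V]
    (g : ℕ → V) (n : ℕ)
    (h : ∀ lam : ℂ, ∑ j ∈ Finset.range n, lam ^ j • g j = 0) :
    ∀ j < n, g j = 0 := by
  intro j hj
  rw [← Module.forall_dual_apply_eq_zero_iff ℂ]
  intro φ
  set P : Polynomial ℂ := ∑ i ∈ Finset.range n, Polynomial.C (φ (g i)) * Polynomial.X ^ i with hP
  have hPeval : ∀ lam : ℂ, P.eval lam = 0 := by
    intro lam
    have h2 := congrArg φ (h lam)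
    simp only [map_sum, map_smul, map_zero, smul_eq_mul] at h2
    simp only [hP, Polynomial.eval_finset_sum, Polynomial.eval_mul, Polynomial.eval_C,
      Polynomial.eval_pow, Polynomial.eval_X]
    rw [← h2]
    exact Finset.sum_congr rfl fun i _ => mul_comm _ _
  have hP0 : P = 0 := Polynomial.zero_of_eval_zero _ hPeval
  have hc := congrArg (fun q => Polynomial.coeff q j) hP0
  simp only [hP, Polynomial.finset_sum_coeff, Polynomial.coeff_C_mul, Polynomial.coeff_X_pow,
    Polynomial.coeff_zero, mul_ite, mul_one, mul_zero] at hc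
  rwa [Finset.sum_ite_eq (Finset.range n) j (fun i => φ (g i)),
    if_pos (Finset.mem_range.mpr hj)] at hc

lemma pap_spec (A : X →ₗ.[ℂ] Y) {x : X} (hx : x ∈ A.domain) : pap A x = A ⟨x, hx⟩ :=
  dif_pos hx

lemma pap_zero (A : X →ₗ.[ℂ] Y) : pap A 0 = 0 := by
  rw [pap_spec A A.domain.zero_mem]
  exact A.map_zero

lemma pap_smul (A : X →ₗ.[ℂ] Y) (c : ℂ) {x : X} (hx : x ∈ A.domain) :
    pap A (c • x) = c • pap A x := by
  rw [pap_spec A (A.domain.smul_mem c hx), pap_spec A hx]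
  have : (⟨c • x, A.domain.smul_mem c hx⟩ : A.domain) = c • (⟨x, hx⟩ : A.domain) := rfl
  rw [this, A.map_smul]

lemma pap_smul_real (A : X →ₗ.[ℂ] Y) (r : ℝ) {x : X} (hx : x ∈ A.domain) :
    pap A (r • x) = r • pap A x := by
  rw [← Complex.coe_smul, ← Complex.coe_smul, pap_smul A _ hx]

lemma pap_add (A : X →ₗ.[ℂ] Y) {x y : X} (hx : x ∈ A.domain) (hy : y ∈ A.domain) :
    pap A (x + y) = pap A x + pap A y := by
  rw [pap_spec A (A.domain.add_mem hx hy), pap_spec A hx, pap_spec A hy]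
  have : (⟨x + y, A.domain.add_mem hx hy⟩ : A.domain) = (⟨x, hx⟩ : A.domain) + ⟨y, hy⟩ := rfl
  rw [this, A.map_add]

lemma pap_sum (A : X →ₗ.[ℂ] Y) {ι : Type*} (s : Finset ι) (g : ι → X)
    (hg : ∀ i ∈ s, g i ∈ A.domain) :
    pap A (∑ i ∈ s, g i) = ∑ i ∈ s, pap A (g i) := by
  classical
  induction s using Finset.induction with
  | empty => simpa using pap_zero A
  | @insert i s hi ih =>
    rw [Finset.sum_insert hi, Finset.sum_insert hi,
      pap_add A (hg i (Finset.mem_insert_self i s))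
        (Submodule.sum_mem _ fun j hj => hg j (Finset.mem_insert_of_mem hj)),
      ih fun j hj => hg j (Finset.mem_insert_of_mem hj)]

/-- If the pencil `λE - A` has a right singular polynomial, then there is a nonzero
`X`-valued polynomial function `f(t) = ∑_{j=0}^k t^j b_j` with `f(0) = 0`, `f(t) ∈ D(A)`
for all real `t`, and `E f'(t) = A f(t)` for all real `t`; that is, the Cauchy problem
`E ẋ = A x`, `x(0) = 0` has a nonzero classical solution. -/
theorem stmt_12 (E : X →L[ℂ] Y) (A : X →ₗ.[ℂ] Y)
    (hdense : Dense (A.domain : Set X)) (hclosed : IsClosed (A.graph : Set (X × Y)))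
    (h : HasRightSingularPoly E A) :
    ∃ (k : ℕ) (b : ℕ → X),
      (∃ j ≤ k, b j ≠ 0) ∧
      b 0 = 0 ∧
      (∀ t : ℝ, (∑ j ∈ Finset.range (k + 1), t ^ j • b j) ∈ A.domain) ∧
      (∀ t : ℝ, ∃ v : X,
        HasDerivAt (fun s : ℝ => ∑ j ∈ Finset.range (k + 1), s ^ j • b j) v t ∧
        E v = pap A (∑ j ∈ Finset.range (k + 1), t ^ j • b j)) := by
  obtain ⟨k, a, ⟨j0, hj0k, hj0ne⟩, hall⟩ := h
  have hdom : ∀ lam : ℂ, polyEval a k lam ∈ A.domain := fun lam => (hall lam).1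
  have heq : ∀ lam : ℂ, lam • E (polyEval a k lam) = pap A (polyEval a k lam) :=
    fun lam => sub_eq_zero.mp (hall lam).2
  -- Step 1: each coefficient lies in the domain
  have hamem : ∀ j ≤ k, a j ∈ A.domain := by
    have hq := coeff_zero_of_forall_eval_zero (fun j => A.domain.mkQ (a j)) (k + 1) ?_
    · intro j hj
      have := hq j (by omega)
      simpa [Submodule.Quotient.mk_eq_zero] using this
    · intro lam
      have h0 : A.domain.mkQ (polyEval a k lam) = 0 :=
        (Submodule.Quotient.mk_eq_zero _).mpr (hdom lam)
      rw [← h0, polyEval, map_sum]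
      exact Finset.sum_congr rfl fun j _ => (map_smul _ _ _).symm
  -- Step 2: pap A commutes with polyEval
  set Aa : ℕ → Y := fun j => pap A (a j) with hAa
  have hpap : ∀ lam : ℂ,
      pap A (polyEval a k lam) = ∑ j ∈ Finset.range (k + 1), lam ^ j • Aa j := by
    intro lam
    rw [polyEval, pap_sum A _ _ fun j hj =>
      A.domain.smul_mem _ (hamem j (by simpa using Nat.lt_succ_iff.mp (Finset.mem_range.mp hj)))]
    exact Finset.sum_congr rfl fun j hj =>
      pap_smul A _ (hamem j (Nat.lt_succ_iff.mp (Finset.mem_range.mp hj)))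
  -- Step 3: coefficient identities
  set G : ℕ → Y := fun j =>
    (if j = 0 then 0 else E (a (j - 1))) - (if j = k + 1 then 0 else Aa j) with hG
  have hGzero : ∀ j < k + 2, G j = 0 := by
    apply coeff_zero_of_forall_eval_zero
    intro lam
    have h1 : ∑ j ∈ Finset.range (k + 2),
        lam ^ j • (if j = 0 then (0 : Y) else E (a (j - 1)))
        = lam • E (polyEval a k lam) := by
      rw [Finset.sum_range_succ' _ (k + 1), if_pos rfl, smul_zero, add_zero,
        polyEval, map_sum, Finset.smul_sum]
      refine Finset.sum_congr rfl fun j _ => ?_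
      rw [if_neg (Nat.succ_ne_zero j), Nat.add_sub_cancel, map_smul, smul_smul, ← pow_succ']
    have h2 : ∑ j ∈ Finset.range (k + 2),
        lam ^ j • (if j = k + 1 then (0 : Y) else Aa j)
        = pap A (polyEval a k lam) := by
      rw [Finset.sum_range_succ, if_pos rfl, smul_zero, add_zero, hpap]
      refine Finset.sum_congr rfl fun j hj => ?_
      have hjk : j ≠ k + 1 := by have := Finset.mem_range.mp hj; omega
      rw [if_neg hjk]
    calc ∑ j ∈ Finset.range (k + 2), lam ^ j • G j
        = (∑ j ∈ Finset.range (k + 2),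
            lam ^ j • (if j = 0 then (0 : Y) else E (a (j - 1))))
          - ∑ j ∈ Finset.range (k + 2),
            lam ^ j • (if j = k + 1 then (0 : Y) else Aa j) := by
          rw [← Finset.sum_sub_distrib]
          exact Finset.sum_congr rfl fun j _ => smul_sub _ _ _
      _ = 0 := by rw [h1, h2, heq, sub_self]
  have hAa0 : Aa 0 = 0 := by
    have h0 := hGzero 0 (by omega)
    have hne : (0 : ℕ) ≠ k + 1 := by omega
    simpa [hG, hne] using h0
  have hEak : E (a k) = 0 := by
    have h0 := hGzero (k + 1) (by omega)
    simpa [hG] using h0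
  have hrec : ∀ j, 1 ≤ j → j ≤ k → Aa j = E (a (j - 1)) := by
    intro j h1j hjk
    have h0 := hGzero j (by omega)
    have hne0 : j ≠ 0 := by omega
    have hnek : j ≠ k + 1 := by omega
    rw [hG] at h0
    simp only [if_neg hne0, if_neg hnek] at h0
    exact (sub_eq_zero.mp h0).symm
  -- Step 4: build the solution
  set b : ℕ → X := fun i =>
    if i = 0 then 0 else ((Nat.factorial i : ℝ))⁻¹ • a (k + 1 - i) with hb
  have hbmem : ∀ i ≤ k + 1, b i ∈ A.domain := by
    intro i hi
    by_cases hi0 : i = 0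
    · simp [hb, hi0]
    · simp only [hb, if_neg hi0]
      exact Submodule.smul_of_tower_mem _ _ (hamem _ (by omega))
  refine ⟨k + 1, b, ⟨k + 1 - j0, by omega, ?_⟩, by simp [hb], ?_, ?_⟩
  · -- nonzero
    have hne0 : k + 1 - j0 ≠ 0 := by omega
    have hidx : k + 1 - (k + 1 - j0) = j0 := by omega
    simp only [hb, if_neg hne0, hidx]
    exact smul_ne_zero (by positivity) hj0ne
  · -- membership
    intro t
    exact Submodule.sum_mem _ fun i hi =>
      Submodule.smul_of_tower_mem _ _ (hbmem i (Nat.lt_succ_iff.mp (Finset.mem_range.mp hi)))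
  · -- derivative and equation
    intro t
    refine ⟨∑ j ∈ Finset.range (k + 2), ((j : ℝ) * t ^ (j - 1)) • b j, ?_, ?_⟩
    · exact HasDerivAt.fun_sum fun j _ => (hasDerivAt_pow j t).smul_const (b j)
    · -- E v = pap A (f t)
      have hEv : E (∑ j ∈ Finset.range (k + 2), ((j : ℝ) * t ^ (j - 1)) • b j)
          = ∑ m ∈ Finset.range (k + 1),
              (t ^ m * ((Nat.factorial m : ℝ))⁻¹) • E (a (k - m)) := by
        rw [map_sum, Finset.sum_range_succ' _ (k + 1)]
        simp only [Nat.cast_zero, zero_mul, zero_smul, map_zero, add_zero]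
        refine Finset.sum_congr rfl fun m _ => ?_
        have hbm : b (m + 1) = ((Nat.factorial (m + 1) : ℝ))⁻¹ • a (k - m) := by
          have hidx : k + 1 - (m + 1) = k - m := by omega
          simp only [hb, if_neg (Nat.succ_ne_zero m), hidx]
        rw [hbm, E.map_smul_of_tower, E.map_smul_of_tower, smul_smul]
        congr 1
        have hf : (Nat.factorial m : ℝ) ≠ 0 := Nat.cast_ne_zero.mpr m.factorial_ne_zero
        have hm1 : ((m : ℝ) + 1) ≠ 0 := by positivity
        rw [Nat.factorial_succ, Nat.succ_sub_one]
        push_cast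
        field_simp
      have hpapf : pap A (∑ j ∈ Finset.range (k + 2), t ^ j • b j)
          = ∑ m ∈ Finset.range (k + 1),
              (t ^ (m + 1) * ((Nat.factorial (m + 1) : ℝ))⁻¹) • Aa (k - m) := by
        rw [pap_sum A _ _ fun i hi => Submodule.smul_of_tower_mem _ _
          (hbmem i (Nat.lt_succ_iff.mp (Finset.mem_range.mp hi)))]
        rw [Finset.sum_range_succ' _ (k + 1)]
        have h00 : pap A (t ^ 0 • b 0) = 0 := by
          simp only [hb, if_pos rfl, smul_zero]
          exact pap_zero A
        rw [h00, add_zero]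
        refine Finset.sum_congr rfl fun m _ => ?_
        have hbm : b (m + 1) = ((Nat.factorial (m + 1) : ℝ))⁻¹ • a (k - m) := by
          have hidx : k + 1 - (m + 1) = k - m := by omega
          simp only [hb, if_neg (Nat.succ_ne_zero m), hidx]
        rw [hbm, pap_smul_real A _ (Submodule.smul_of_tower_mem _ _ (hamem _ (by omega))),
          pap_smul_real A _ (hamem _ (by omega)), smul_smul]
      rw [hEv, hpapf]
      -- last reindexing: both sides equal the same range-k sum
      rw [Finset.sum_range_succ' (fun m => (t ^ m * ((Nat.factorial m : ℝ))⁻¹) • E (a (k - m))) k,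
        Finset.sum_range_succ (fun m => (t ^ (m + 1) * ((Nat.factorial (m + 1) : ℝ))⁻¹) • Aa (k - m)) k]
      have hlast : Aa (k - k) = 0 := by
        rw [Nat.sub_self]; exact hAa0
      have hfirst : E (a (k - 0)) = 0 := by
        rw [Nat.sub_zero]; exact hEak
      rw [hlast, hfirst, smul_zero, smul_zero, add_zero, add_zero]
      refine Finset.sum_congr rfl fun m hm => ?_
      have hm' : m < k := Finset.mem_range.mp hm
      have : Aa (k - m) = E (a (k - m - 1)) := hrec (k - m) (by omega) (by omega)
      rw [this, Nat.sub_sub]
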